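/- Let A be an n×n complex matrix, v ∈ ℂⁿ a column vector, and k ≥ 1 an integer. Suppose A^k = 0, (A + v eₙᵀ)^k = 0, and A + v eₙᵀ is nilpotent. Then ∑_{j=0}^{k−1} A^j (v eₙᵀ) A^{k−1−j} = 0. -/

import Mathlib

open Matrix Finset

/-- Sandwich lemma: `(v wᵀ) M (v wᵀ) = tr((v wᵀ) M) • (v wᵀ)`. -/
lemma stmt2_sandwich {m : Type*} [Fintype m] [DecidableEq m] (v w : m → ℂ)
    (M : Matrix m m ℂ) :
    vecMulVec v w * M * vecMulVec v w = (Matrix.trace (vecMulVec v w * M)) • vecMulVec v w := by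
  ext i j
  simp [Matrix.mul_apply, vecMulVec_apply, Matrix.trace, Matrix.diag, Finset.sum_mul,
    Finset.mul_sum]
  exact Finset.sum_congr rfl fun b _ => Finset.sum_congr rfl fun a _ => by ring

/-- A power (with positive exponent) of a nilpotent complex matrix has trace zero. -/
lemma stmt2_trace_pow_zero {m : Type*} [Fintype m] [DecidableEq m]
    (A : Matrix m m ℂ) (hA : IsNilpotent A) (j : ℕ) :
    Matrix.trace (A ^ (j + 1)) = 0 := by
  have h : IsNilpotent (A ^ (j + 1)) := hA.pow_succ j
  have := Matrix.isNilpotent_trace_of_isNilpotent h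
  exact this.eq_zero

/-- Conditional expansion of `(A + E)^m` where `E = v wᵀ`. -/
lemma stmt2_expand {m : Type*} [Fintype m] [DecidableEq m] (v w : m → ℂ)
    (A : Matrix m m ℂ) (N : ℕ)
    (h : ∀ i, i + 2 ≤ N → Matrix.trace (vecMulVec v w * A ^ i) = 0) :
    (A + vecMulVec v w) ^ N
      = A ^ N + ∑ j ∈ Finset.range N, A ^ j * vecMulVec v w * A ^ (N - 1 - j) := by
  set E := vecMulVec v w with hE
  induction N with
  | zero => simp
  | succ N ih =>
    have hN : ∀ i, i + 2 ≤ N → Matrix.trace (E * A ^ i) = 0 :=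
      fun i hi => h i (by omega)
    rw [pow_succ, ih hN, add_mul, mul_add, mul_add]
    have hSE : (∑ j ∈ Finset.range N, A ^ j * E * A ^ (N - 1 - j)) * E = 0 := by
      rw [Finset.sum_mul]
      refine Finset.sum_eq_zero fun j hj => ?_
      have hj' := Finset.mem_range.mp hj
      have : E * A ^ (N - 1 - j) * E = 0 := by
        rw [stmt2_sandwich, h (N - 1 - j) (by omega), zero_smul]
      calc A ^ j * E * A ^ (N - 1 - j) * E
          = A ^ j * (E * A ^ (N - 1 - j) * E) := by
            rw [mul_assoc, mul_assoc, mul_assoc]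
        _ = 0 := by rw [this, mul_zero]
    have hSA : (∑ j ∈ Finset.range N, A ^ j * E * A ^ (N - 1 - j)) * A
        = ∑ j ∈ Finset.range N, A ^ j * E * A ^ (N - j) := by
      rw [Finset.sum_mul]
      refine Finset.sum_congr rfl fun j hj => ?_
      have hj' := Finset.mem_range.mp hj
      have : N - 1 - j + 1 = N - j := by omega
      rw [mul_assoc, ← pow_succ, this]
    rw [hSE, hSA, ← pow_succ]
    have : ∑ j ∈ Finset.range (N + 1), A ^ j * E * A ^ (N + 1 - 1 - j)
        = (∑ j ∈ Finset.range N, A ^ j * E * A ^ (N - j)) + A ^ N * E := by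
      rw [Finset.sum_range_succ]
      have h1 : ∑ j ∈ Finset.range N, A ^ j * E * A ^ (N + 1 - 1 - j)
          = ∑ j ∈ Finset.range N, A ^ j * E * A ^ (N - j) := by
        refine Finset.sum_congr rfl fun j hj => ?_
        have hjN := Finset.mem_range.mp hj
        have e : N + 1 - 1 - j = N - j := by omega
        rw [e]
      rw [h1]
      norm_num
    rw [this]
    abel

theorem stmt_2 (n k : ℕ) (hk : 1 ≤ k)
    (A : Matrix (Fin (n + 1)) (Fin (n + 1)) ℂ) (v : Fin (n + 1) → ℂ)
    (hA : A ^ k = 0)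
    (hBk : (A + Matrix.vecMulVec v (Pi.single (Fin.last n) 1)) ^ k = 0)
    (hB : IsNilpotent (A + Matrix.vecMulVec v (Pi.single (Fin.last n) 1))) :
    ∑ j ∈ Finset.range k,
      A ^ j * Matrix.vecMulVec v (Pi.single (Fin.last n) 1) * A ^ (k - 1 - j) = 0 := by
  set w : Fin (n + 1) → ℂ := Pi.single (Fin.last n) 1 with hw
  set E := Matrix.vecMulVec v w with hE
  have hAnil : IsNilpotent A := ⟨k, hA⟩
  -- key: all the scalars `tr(E * A^m)` vanish
  have key : ∀ m : ℕ, Matrix.trace (E * A ^ m) = 0 := by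
    intro m
    induction m using Nat.strong_induction_on with
    | _ m ih =>
      have hexp := stmt2_expand v w A (m + 1) (fun i hi => ih i (by omega))
      have htr := congrArg Matrix.trace hexp
      rw [stmt2_trace_pow_zero _ hB m, Matrix.trace_add, stmt2_trace_pow_zero A hAnil m,
        Matrix.trace_sum] at htr
      have hsum : ∀ j ∈ Finset.range (m + 1),
          Matrix.trace (A ^ j * E * A ^ (m + 1 - 1 - j)) = Matrix.trace (E * A ^ m) := by
        intro j hj
        have hj' := Finset.mem_range.mp hj
        have heq : m + 1 - 1 - j + j = m := by omega
        rw [Matrix.trace_mul_comm, ← mul_assoc, ← pow_add, heq, Matrix.trace_mul_comm]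
      rw [Finset.sum_congr rfl hsum, Finset.sum_const, Finset.card_range, nsmul_eq_mul] at htr
      have hm : ((m + 1 : ℕ) : ℂ) ≠ 0 := Nat.cast_ne_zero.mpr (Nat.succ_ne_zero m)
      rw [zero_add] at htr
      exact (mul_eq_zero.mp htr.symm).resolve_left hm
  have hexp := stmt2_expand v w A k (fun i _ => key i)
  rw [hBk, hA, zero_add] at hexp
  exact hexp.symm
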